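/- (Exact Rényi divergence of Noisy Gradient Descent on quadratic losses.) Fix m ∈ ℕ, η ∈ (0,1), b > 0, K ∈ ℕ, and λ ∈ (1,∞). For a database x = (x_1,…,x_m) ∈ ℝ^m define the random iteration θ_0 = 0 and θ_{k+1} = θ_k − (η/m) Σ_{i=1}^m (θ_k − x_i) + √(2η) Y_k for k = 0,…,K−1, where Y_0,…,Y_{K−1} are i.i.d. N(0, b²). Let p be the density of θ_K for x = (1,0,…,0) and q that for x' = (0,0,…,0). Then both are Gaussian densities with common variance 2η b² Σ_{k=0}^{K−1} (1−η)^{2k} and means differing by (1/m)(1 − (1−η)^K), and D_λ(p, q) = ( λ / (4 b² m²) ) · ( (2 − η) / (1 + (1−η)^K) ) · ( 1 − (1−η)^K ). -/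

import Mathlib

open MeasureTheory ProbabilityTheory
open scoped BigOperators

open scoped NNReal ENNReal

lemma pdf_conv (μ1 μ2 : ℝ) (v1 v2 : ℝ≥0) (h1 : v1 ≠ 0) (h2 : v2 ≠ 0) (t x : ℝ) :
    gaussianPDFReal μ1 v1 x * gaussianPDFReal μ2 v2 (t - x)
    = gaussianPDFReal (μ1 + μ2) (v1 + v2) t *
      gaussianPDFReal (μ1 + v1 * (t - μ1 - μ2) / (v1 + v2)) (v1 * v2 / (v1 + v2)) x := by
  have hv1 : (0:ℝ) < v1 := lt_of_le_of_ne v1.coe_nonneg (by exact_mod_cast (Ne.symm h1))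
  have hv2 : (0:ℝ) < v2 := lt_of_le_of_ne v2.coe_nonneg (by exact_mod_cast (Ne.symm h2))
  have hv12 : (0:ℝ) < (v1:ℝ) + v2 := by linarith
  have hw : ((v1 * v2 / (v1 + v2) : ℝ≥0) : ℝ) = (v1:ℝ) * v2 / ((v1:ℝ) + v2) := by
    push_cast; ring
  have hv12' : ((v1 + v2 : ℝ≥0):ℝ) = (v1:ℝ) + v2 := by push_cast; ring
  simp only [gaussianPDFReal, hw, hv12']
  have hpi : (0:ℝ) < Real.pi := Real.pi_pos
  have hc : (Real.sqrt (2 * Real.pi * v1))⁻¹ * (Real.sqrt (2 * Real.pi * v2))⁻¹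
      = (Real.sqrt (2 * Real.pi * ((v1:ℝ) + v2)))⁻¹ *
        (Real.sqrt (2 * Real.pi * ((v1:ℝ) * v2 / ((v1:ℝ) + v2))))⁻¹ := by
    rw [← mul_inv, ← mul_inv, ← Real.sqrt_mul (by positivity), ← Real.sqrt_mul (by positivity)]
    congr 1
    field_simp
  have he : (-(x - μ1) ^ 2 / (2 * v1)) + (-(t - x - μ2) ^ 2 / (2 * v2))
      = (-(t - (μ1 + μ2)) ^ 2 / (2 * ((v1:ℝ) + v2)))
        + (-(x - (μ1 + (v1:ℝ) * (t - μ1 - μ2) / ((v1:ℝ) + v2))) ^ 2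
            / (2 * ((v1:ℝ) * v2 / ((v1:ℝ) + v2)))) := by
    field_simp
    ring
  rw [mul_mul_mul_comm, hc, ← Real.exp_add, he, Real.exp_add, mul_mul_mul_comm]

lemma map_add_gaussian {Ω : Type*} [MeasurableSpace Ω] (P : Measure Ω) [IsProbabilityMeasure P]
    (X Y : Ω → ℝ) (hX : Measurable X) (hY : Measurable Y) (h : IndepFun X Y P)
    (μ1 μ2 : ℝ) (v1 v2 : ℝ≥0) (h1 : Measure.map X P = gaussianReal μ1 v1)
    (h2 : Measure.map Y P = gaussianReal μ2 v2) (hv2 : v2 ≠ 0) :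
    Measure.map (fun ω => X ω + Y ω) P = gaussianReal (μ1 + μ2) (v1 + v2) := by
  by_cases hv1 : v1 = 0
  · subst hv1
    rw [gaussianReal_zero_var] at h1
    have hXae : ∀ᵐ ω ∂P, X ω = μ1 := by
      have : P (X ⁻¹' {μ1}ᶜ) = 0 := by
        have := Measure.map_apply (μ := P) hX (MeasurableSet.compl (measurableSet_singleton μ1))
        rw [h1] at this
        rw [← this]
        simp [Measure.dirac_apply' _ (measurableSet_singleton μ1).compl]
      rw [ae_iff]
      convert this using 2
      ext; simp
    have : Measure.map (fun ω => X ω + Y ω) P = Measure.map (fun ω => μ1 + Y ω) P := by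
      apply Measure.map_congr
      filter_upwards [hXae] with ω hω
      rw [hω]
    rw [this, show (fun ω => μ1 + Y ω) = (fun z => μ1 + z) ∘ Y from rfl,
      ← Measure.map_map (measurable_const_add μ1) hY, h2, gaussianReal_map_const_add]
    rw [zero_add, add_comm μ2 μ1]
  · have hprod : Measure.map (fun ω => (X ω, Y ω)) P = (Measure.map X P).prod (Measure.map Y P) :=
      (indepFun_iff_map_prod_eq_prod_map_map hX.aemeasurable hY.aemeasurable).mp h
    have : Measure.map (fun ω => X ω + Y ω) P
        = Measure.map (fun p : ℝ × ℝ => p.1 + p.2)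
          ((gaussianReal μ1 v1).prod (gaussianReal μ2 v2)) := by
      rw [← h1, ← h2, ← hprod, Measure.map_map measurable_add (hX.prodMk hY)]
      rfl
    rw [this, gaussianReal_of_var_ne_zero _ hv1, gaussianReal_of_var_ne_zero _ hv2,
      gaussianReal_of_var_ne_zero _ (by simp [hv1] : v1 + v2 ≠ 0)]
    ext s hs
    rw [Measure.map_apply measurable_add hs, withDensity_apply _ hs,
      Measure.prod_apply (measurable_add hs)]
    have step1 : ∀ x : ℝ, (volume.withDensity (gaussianPDF μ2 v2))
        (Prod.mk x ⁻¹' ((fun p : ℝ × ℝ => p.1 + p.2) ⁻¹' s))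
        = ∫⁻ y, s.indicator (fun u => gaussianPDF μ2 v2 (u - x)) (x + y) := by
      intro x
      have hms : MeasurableSet (Prod.mk x ⁻¹' ((fun p : ℝ × ℝ => p.1 + p.2) ⁻¹' s)) :=
        (measurable_add hs).preimage (measurable_prodMk_left)
      rw [withDensity_apply _ hms, ← lintegral_indicator hms]
      congr 1
      ext y
      by_cases hy : x + y ∈ s <;> simp [Set.indicator, hy, Set.mem_preimage]
    calc ∫⁻ x, (volume.withDensity (gaussianPDF μ2 v2))
            (Prod.mk x ⁻¹' ((fun p : ℝ × ℝ => p.1 + p.2) ⁻¹' s))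
            ∂(volume.withDensity (gaussianPDF μ1 v1))
        = ∫⁻ x, (∫⁻ u in s, gaussianPDF μ2 v2 (u - x))
            ∂(volume.withDensity (gaussianPDF μ1 v1)) := by
          refine lintegral_congr fun x => ?_
          rw [step1 x, ← lintegral_indicator hs]
          exact lintegral_add_left_eq_self (s.indicator fun u => gaussianPDF μ2 v2 (u - x)) x
      _ = ∫⁻ x, ∫⁻ u in s, gaussianPDF μ1 v1 x * gaussianPDF μ2 v2 (u - x) := by
          have hgm : Measurable fun x : ℝ => ∫⁻ u in s, gaussianPDF μ2 v2 (u - x) := by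
            apply Measurable.lintegral_prod_right (f := fun x u => gaussianPDF μ2 v2 (u - x))
            exact (measurable_gaussianPDF μ2 v2).comp (measurable_snd.sub measurable_fst)
          rw [lintegral_withDensity_eq_lintegral_mul _ (measurable_gaussianPDF _ _) hgm]
          refine lintegral_congr fun x => ?_
          simp only [Pi.mul_apply]
          have hmeas : Measurable fun u : ℝ => gaussianPDF μ2 v2 (u - x) :=
            (measurable_gaussianPDF μ2 v2).comp (measurable_id.sub_const x)
          rw [← lintegral_const_mul (gaussianPDF μ1 v1 x) hmeas]
      _ = ∫⁻ u in s, ∫⁻ x, gaussianPDF μ1 v1 x * gaussianPDF μ2 v2 (u - x) := by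
          apply lintegral_lintegral_swap
          apply Measurable.aemeasurable
          exact ((measurable_gaussianPDF μ1 v1).comp measurable_fst).mul
            ((measurable_gaussianPDF μ2 v2).comp (measurable_snd.sub measurable_fst))
      _ = ∫⁻ u in s, gaussianPDF (μ1 + μ2) (v1 + v2) u := by
          refine setLIntegral_congr_fun hs (fun u _ => ?_)
          have key : ∀ x : ℝ, gaussianPDF μ1 v1 x * gaussianPDF μ2 v2 (u - x)
              = gaussianPDF (μ1 + μ2) (v1 + v2) u *
                ENNReal.ofReal (gaussianPDFReal
                  (μ1 + v1 * (u - μ1 - μ2) / (v1 + v2)) (v1 * v2 / (v1 + v2)) x) := by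
            intro x
            rw [gaussianPDF, gaussianPDF, gaussianPDF,
              ← ENNReal.ofReal_mul (gaussianPDFReal_nonneg _ _ _),
              ← ENNReal.ofReal_mul (gaussianPDFReal_nonneg _ _ _),
              pdf_conv μ1 μ2 v1 v2 hv1 hv2 u x]
          simp_rw [key]
          rw [lintegral_const_mul _ (measurable_gaussianPDFReal _ _).ennreal_ofReal,
            lintegral_gaussianPDFReal_eq_one _ (by positivity : v1 * v2 / (v1 + v2) ≠ 0), mul_one]

lemma map_sum_gaussian {Ω : Type*} [MeasurableSpace Ω] (P : Measure Ω) [IsProbabilityMeasure P]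
    (Y : ℕ → Ω → ℝ) (hYm : ∀ k, Measurable (Y k))
    (hindep : iIndepFun Y P)
    (v0 : ℝ≥0) (hv0 : v0 ≠ 0)
    (hgauss : ∀ k, Measure.map (Y k) P = gaussianReal 0 v0)
    (a : ℕ → ℝ) (ha : ∀ k, a k ≠ 0) (n : ℕ) :
    Measure.map (fun ω => ∑ k ∈ Finset.range n, a k * Y k ω) P
      = gaussianReal 0 (∑ k ∈ Finset.range n, ((a k) ^ 2).toNNReal * v0) := by
  set Z : ℕ → Ω → ℝ := fun k ω => a k * Y k ω with hZ
  have hZm : ∀ k, Measurable (Z k) := fun k => (hYm k).const_mul (a k)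
  have hZindep : iIndepFun Z P :=
    hindep.comp (fun k t => a k * t) (fun k => measurable_const_mul (a k))
  have hZgauss : ∀ k, Measure.map (Z k) P
      = gaussianReal 0 (((a k) ^ 2).toNNReal * v0) := by
    intro k
    have h1 : Z k = (fun t => a k * t) ∘ Y k := rfl
    have h2 : (⟨(a k)^2, sq_nonneg _⟩ : ℝ≥0) = ((a k) ^ 2).toNNReal := by
      ext; simp [Real.coe_toNNReal _ (sq_nonneg (a k))]
    rw [h1, ← Measure.map_map (measurable_const_mul (a k)) (hYm k), hgauss k,
      gaussianReal_map_const_mul, mul_zero]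
    congr 2
  induction n with
  | zero =>
    simp only [Finset.range_zero, Finset.sum_empty, gaussianReal_zero_var]
    rw [Measure.map_const]
    simp
  | succ n ih =>
    have hsum : (fun ω => ∑ k ∈ Finset.range (n+1), a k * Y k ω)
        = fun ω => (∑ k ∈ Finset.range n, a k * Y k ω) + Z n ω := by
      funext ω; rw [Finset.sum_range_succ]
    rw [hsum, Finset.sum_range_succ]
    have hind : IndepFun (fun ω => ∑ k ∈ Finset.range n, a k * Y k ω) (Z n) P := by
      have h3 := hZindep.indepFun_sum_range_succ hZm n
      have he : (∑ j ∈ Finset.range n, Z j) = fun ω => ∑ k ∈ Finset.range n, a k * Y k ω := by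
        funext ω; rw [Finset.sum_apply]
      rwa [he] at h3
    have hv2 : ((a n) ^ 2).toNNReal * v0 ≠ 0 := by
      simp only [ne_eq, mul_eq_zero, not_or, Real.toNNReal_eq_zero, not_le]
      exact ⟨lt_of_le_of_ne (sq_nonneg _) (Ne.symm (pow_ne_zero 2 (ha n))), hv0⟩
    have hfin := map_add_gaussian P _ _
      (Finset.measurable_sum (Finset.range n) (fun k _ => hZm k)) (hZm n) hind
      0 0 _ _ ih (hZgauss n) hv2
    rw [add_zero] at hfin
    exact hfin

lemma theta_form {Ω : Type*} (r c d : ℝ) (f : ℕ → Ω → ℝ) (Y : ℕ → Ω → ℝ)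
    (h0 : ∀ ω, f 0 ω = 0) (hrec : ∀ k ω, f (k + 1) ω = r * f k ω + d + c * Y k ω)
    (n : ℕ) (ω : Ω) :
    f n ω = d * (∑ k ∈ Finset.range n, r ^ k)
      + ∑ k ∈ Finset.range n, (c * r ^ (n - 1 - k)) * Y k ω := by
  induction n with
  | zero => simp [h0]
  | succ n ih =>
    rw [hrec, ih]
    have hpow : ∀ k ∈ Finset.range n,
        (c * r ^ (n + 1 - 1 - k)) * Y k ω = r * ((c * r ^ (n - 1 - k)) * Y k ω) := by
      intro k hk
      rw [Finset.mem_range] at hk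
      have h1 : n + 1 - 1 - k = (n - 1 - k) + 1 := by omega
      rw [h1, pow_succ]
      ring
    have hG : (∑ k ∈ Finset.range (n + 1), r ^ k)
        = r * (∑ k ∈ Finset.range n, r ^ k) + 1 := by
      rw [geom_sum_succ]
    have hS : (∑ k ∈ Finset.range (n + 1), (c * r ^ (n + 1 - 1 - k)) * Y k ω)
        = r * (∑ k ∈ Finset.range n, (c * r ^ (n - 1 - k)) * Y k ω) + c * Y n ω := by
      rw [Finset.sum_range_succ, Finset.sum_congr rfl hpow, ← Finset.mul_sum]
      have h2 : n + 1 - 1 - n = 0 := by omega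
      rw [h2, pow_zero]
      ring
    rw [hG, hS]
    ring

/-- Exact Rényi divergence of Noisy Gradient Descent on the quadratic ERM problem
`ℓ(θ, x_i) = ½(θ − x_i)²` with `Θ = ℝ`, `θ_0 = 0`, learning rate `η` and i.i.d. noise
`Y_k ~ N(0, b²)`: for the adjacent databases `x = (1,0,…,0)` and `x' = (0,0,…,0)`, the
outputs `θ_K` and `θ'_K` have Gaussian densities `p`, `q` with common variance
`2ηb² Σ_{k<K} (1−η)^{2k}` and means differing by `(1/m)(1 − (1−η)^K)`, and
`D_λ(p,q) = (λ/(4b²m²)) · ((2−η)/(1+(1−η)^K)) · (1 − (1−η)^K)`. -/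
theorem renyiDiv_noisyGD (m : ℕ) (hm : 0 < m) (η : ℝ) (hη0 : 0 < η) (hη1 : η < 1)
    (b : ℝ) (hb : 0 < b) (K : ℕ) (hK : 0 < K) (l : ℝ) (hl : 1 < l)
    {Ω : Type*} [MeasurableSpace Ω] (P : Measure Ω) [IsProbabilityMeasure P]
    (Y : ℕ → Ω → ℝ) (hYm : ∀ k, Measurable (Y k))
    (hindep : iIndepFun Y P)
    (hgauss : ∀ k, Measure.map (Y k) P = gaussianReal 0 ((b ^ 2).toNNReal))
    (x x' : Fin m → ℝ) (hx : x = fun i => if i.val = 0 then 1 else 0)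
    (hx' : x' = fun _ => 0)
    (θ θ' : ℕ → Ω → ℝ) (hθ0 : ∀ ω, θ 0 ω = 0) (hθ'0 : ∀ ω, θ' 0 ω = 0)
    (hθ : ∀ k ω, θ (k + 1) ω
      = θ k ω - (η / m) * (∑ i, (θ k ω - x i)) + Real.sqrt (2 * η) * Y k ω)
    (hθ' : ∀ k ω, θ' (k + 1) ω
      = θ' k ω - (η / m) * (∑ i, (θ' k ω - x' i)) + Real.sqrt (2 * η) * Y k ω) :
    let σ2 : ℝ := 2 * η * b ^ 2 * ∑ k ∈ Finset.range K, (1 - η) ^ (2 * k)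
    let μp : ℝ := (1 / m) * (1 - (1 - η) ^ K)
    let p : ℝ → ℝ := fun t => (1 / Real.sqrt (2 * Real.pi * σ2)) *
      Real.exp (-(t - μp) ^ 2 / (2 * σ2))
    let q : ℝ → ℝ := fun t => (1 / Real.sqrt (2 * Real.pi * σ2)) *
      Real.exp (-(t - 0) ^ 2 / (2 * σ2))
    Measure.map (θ K) P = volume.withDensity (fun t => ENNReal.ofReal (p t)) ∧
    Measure.map (θ' K) P = volume.withDensity (fun t => ENNReal.ofReal (q t)) ∧
    μp - 0 = (1 / m) * (1 - (1 - η) ^ K) ∧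
    (1 / (l - 1)) * Real.log (∫ t : ℝ, p t ^ l * q t ^ (1 - l))
      = (l / (4 * b ^ 2 * m ^ 2)) * ((2 - η) / (1 + (1 - η) ^ K))
        * (1 - (1 - η) ^ K) := by
  intro σ2 μp p q
  have hσ2 : σ2 = 2 * η * b ^ 2 * ∑ k ∈ Finset.range K, (1 - η) ^ (2 * k) := rfl
  have hμp : μp = (1 / m) * (1 - (1 - η) ^ K) := rfl
  have hp : p = fun t => (1 / Real.sqrt (2 * Real.pi * σ2)) *
      Real.exp (-(t - μp) ^ 2 / (2 * σ2)) := rfl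
  have hq : q = fun t => (1 / Real.sqrt (2 * Real.pi * σ2)) *
      Real.exp (-(t - 0) ^ 2 / (2 * σ2)) := rfl
  clear_value σ2 μp p q
  have hm' : (m : ℝ) ≠ 0 := Nat.cast_ne_zero.mpr hm.ne'
  set r : ℝ := 1 - η with hr
  have hr0 : 0 < r := by rw [hr]; linarith
  have hr1 : r < 1 := by rw [hr]; linarith
  set c : ℝ := Real.sqrt (2 * η) with hc
  have hc2 : c ^ 2 = 2 * η := Real.sq_sqrt (by linarith)
  have hcpos : 0 < c := Real.sqrt_pos.mpr (by linarith)
  set v0 : ℝ≥0 := (b ^ 2).toNNReal with hv0def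
  have hv0 : v0 ≠ 0 := by
    rw [hv0def, ne_eq, Real.toNNReal_eq_zero, not_le]
    positivity
  set a : ℕ → ℝ := fun k => c * r ^ (K - 1 - k) with hadef
  have ha : ∀ k, a k ≠ 0 := fun k => mul_ne_zero hcpos.ne' (pow_ne_zero _ hr0.ne')
  -- sums of databases
  have hsumx : ∑ i, x i = 1 := by
    subst hx
    have hiff : ∀ i : Fin m, (i.val = 0) ↔ (i = ⟨0, hm⟩) := by
      intro i; rw [Fin.ext_iff]
    simp only [hiff]
    rw [Finset.sum_ite_eq' Finset.univ (⟨0, hm⟩ : Fin m) (fun _ => (1 : ℝ))]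
    simp
  have hsumx' : ∑ i, x' i = 0 := by subst hx'; simp
  -- recursions
  have hrec : ∀ k ω, θ (k + 1) ω = r * θ k ω + (η / m) + c * Y k ω := by
    intro k ω
    rw [hθ k ω, Finset.sum_sub_distrib, Finset.sum_const, Finset.card_univ, Fintype.card_fin,
      hsumx, hr]
    push_cast
    field_simp
    ring
  have hrec' : ∀ k ω, θ' (k + 1) ω = r * θ' k ω + 0 + c * Y k ω := by
    intro k ω
    rw [hθ' k ω, Finset.sum_sub_distrib, Finset.sum_const, Finset.card_univ, Fintype.card_fin,
      hsumx', hr]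
    push_cast
    field_simp
    ring
  -- positivity facts
  have hσ2pos : 0 < σ2 := by
    rw [hσ2]
    apply mul_pos (mul_pos (mul_pos two_pos hη0) (pow_pos hb 2))
    exact Finset.sum_pos (fun k _ => pow_pos hr0 _) ⟨0, Finset.mem_range.mpr hK⟩
  -- variance
  set V : ℝ≥0 := ∑ k ∈ Finset.range K, ((a k) ^ 2).toNNReal * v0 with hVdef
  have hVcoe : (V : ℝ) = σ2 := by
    have h1 : ∀ k, ((((a k) ^ 2).toNNReal * v0 : ℝ≥0) : ℝ) = (2 * η * b ^ 2) * (r ^ 2) ^ (K - 1 - k) := by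
      intro k
      rw [NNReal.coe_mul, Real.coe_toNNReal _ (sq_nonneg _), hv0def,
        Real.coe_toNNReal _ (sq_nonneg b), hadef]
      simp only []
      rw [mul_pow, hc2, ← pow_right_comm]
      ring
    rw [hVdef, NNReal.coe_sum, Finset.sum_congr rfl (fun k _ => h1 k), ← Finset.mul_sum,
      Finset.sum_range_reflect (fun j => (r ^ 2) ^ j) K, hσ2]
    congr 1
    exact Finset.sum_congr rfl fun k _ => (pow_mul r 2 k).symm
  have hV : V ≠ 0 := by
    intro h
    rw [h] at hVcoe
    simp at hVcoe
    linarith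
  -- law of the sums
  have hS := map_sum_gaussian P Y hYm hindep v0 hv0 hgauss a ha K
  rw [← hVdef] at hS
  have hSm : Measurable (fun ω => ∑ k ∈ Finset.range K, a k * Y k ω) :=
    Finset.measurable_sum (Finset.range K) (fun k _ => (hYm k).const_mul (a k))
  -- geometric sum for the mean
  have hgeo : (η / m) * (∑ k ∈ Finset.range K, r ^ k) = μp := by
    rw [geom_sum_eq hr1.ne, hμp]
    have h1 : r - 1 = -η := by rw [hr]; ring
    rw [h1]
    field_simp
    ring
  -- closed forms for the iterates
  have hθform : θ K = fun ω => μp + ∑ k ∈ Finset.range K, a k * Y k ω := by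
    funext ω
    rw [theta_form r c (η / m) θ Y hθ0 hrec K ω, hgeo, hadef]
  have hθ'form : θ' K = fun ω => ∑ k ∈ Finset.range K, a k * Y k ω := by
    funext ω
    rw [theta_form r c 0 θ' Y hθ'0 hrec' K ω, hadef]
    simp
  have hmapθ : Measure.map (θ K) P = gaussianReal μp V := by
    rw [hθform]
    have h1 : (fun ω => μp + ∑ k ∈ Finset.range K, a k * Y k ω)
        = (fun z => μp + z) ∘ (fun ω => ∑ k ∈ Finset.range K, a k * Y k ω) := rfl
    rw [h1, ← Measure.map_map (measurable_const_add μp) hSm, hS]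
    have h2 := gaussianReal_map_const_add (μ := 0) (v := V) μp
    rw [zero_add] at h2
    exact h2
  have hmapθ' : Measure.map (θ' K) P = gaussianReal 0 V := by rw [hθ'form]; exact hS
  have hcoe2 : ((V : ℝ≥0) : ℝ) = σ2 := hVcoe
  refine ⟨?_, ?_, ?_, ?_⟩
  · rw [hmapθ, gaussianReal_of_var_ne_zero _ hV]
    congr 1
    funext t
    rw [gaussianPDF_def]
    congr 1
    rw [hp]
    simp only [gaussianPDFReal, hVcoe, one_div]
  · rw [hmapθ', gaussianReal_of_var_ne_zero _ hV]
    congr 1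
    funext t
    rw [gaussianPDF_def]
    congr 1
    rw [hq]
    simp only [gaussianPDFReal, hVcoe, one_div, sub_zero]
  · rw [sub_zero, hμp]
  · -- the integral computation
    have hσ2ne : σ2 ≠ 0 := hσ2pos.ne'
    have hσ2nn : σ2.toNNReal ≠ 0 := by
      rw [ne_eq, Real.toNNReal_eq_zero, not_le]
      exact hσ2pos
    have hsqrtpos : 0 < Real.sqrt (2 * Real.pi * σ2) :=
      Real.sqrt_pos.mpr (mul_pos (mul_pos two_pos Real.pi_pos) hσ2pos)
    have hCpos : 0 < 1 / Real.sqrt (2 * Real.pi * σ2) := one_div_pos.mpr hsqrtpos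
    have hplq : ∀ t, p t ^ l * q t ^ (1 - l)
        = Real.exp (l * (l - 1) * μp ^ 2 / (2 * σ2)) * gaussianPDFReal (l * μp) σ2.toNNReal t := by
      intro t
      rw [hp, hq]
      simp only []
      rw [Real.mul_rpow hCpos.le (Real.exp_nonneg _),
        Real.mul_rpow hCpos.le (Real.exp_nonneg _),
        ← Real.exp_mul, ← Real.exp_mul, mul_mul_mul_comm,
        ← Real.rpow_add hCpos, show l + (1 - l) = 1 by ring, Real.rpow_one,
        ← Real.exp_add, gaussianPDFReal, Real.coe_toNNReal _ hσ2pos.le, ← one_div]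
      rw [show Real.exp (l * (l - 1) * μp ^ 2 / (2 * σ2)) *
          (1 / Real.sqrt (2 * Real.pi * σ2) * Real.exp (-(t - l * μp) ^ 2 / (2 * σ2)))
          = 1 / Real.sqrt (2 * Real.pi * σ2) *
            Real.exp (l * (l - 1) * μp ^ 2 / (2 * σ2) + -(t - l * μp) ^ 2 / (2 * σ2)) by
        rw [Real.exp_add]; ring]
      congr 1
      field_simp [hσ2ne]
      ring
    have hint : (∫ t : ℝ, p t ^ l * q t ^ (1 - l))
        = Real.exp (l * (l - 1) * μp ^ 2 / (2 * σ2)) := by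
      simp_rw [hplq]
      rw [MeasureTheory.integral_const_mul, integral_gaussianPDFReal_eq_one _ hσ2nn, mul_one]
    rw [hint, Real.log_exp]
    -- final algebra
    have hrK1 : r ^ K < 1 := pow_lt_one₀ hr0.le hr1 hK.ne'
    have hrKpos : 0 < r ^ K := pow_pos hr0 K
    have h2η : (2 : ℝ) - η ≠ 0 := by linarith
    have h1p : (1 : ℝ) + r ^ K ≠ 0 := by linarith
    have h1m : (1 : ℝ) - r ^ K ≠ 0 := by linarith
    have hl1 : l - 1 ≠ 0 := by linarith
    have hr2 : r ^ 2 ≠ 1 := by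
      have : r ^ 2 < 1 := pow_lt_one₀ hr0.le hr1 two_ne_zero
      linarith
    have hσ2eq : σ2 = 2 * b ^ 2 * ((1 - r ^ K) * (1 + r ^ K)) / (2 - η) := by
      rw [hσ2]
      rw [show (∑ k ∈ Finset.range K, r ^ (2 * k)) = ∑ k ∈ Finset.range K, (r ^ 2) ^ k by
        exact Finset.sum_congr rfl fun k _ => pow_mul r 2 k]
      rw [geom_sum_eq hr2]
      have h3 : (r ^ 2) ^ K = (r ^ K) ^ 2 := by rw [← pow_mul, ← pow_mul, mul_comm]
      have h4 : r ^ 2 - 1 = -(η * (2 - η)) := by rw [hr]; ring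
      rw [h3, h4]
      field_simp
      ring
    rw [hμp, hσ2eq]
    field_simp
    ring
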